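/- Let t, h, x, y, z be real numbers with t, h, x, y, z ≠ 0 and x, y, z ≠ ±h. If sqrt(t·(1/h² - 1/x²)·(1/h² - 1/y²)·(1/h² - 1/z²)) = (1/h + 1/x)·(1/h + 1/y)·(1/h + 1/z), then t·(z-h)/(z+h) = (x+h)(y+h)/((x-h)(y-h)). -/

import Mathlib

theorem stmt_12 (t h x y z : ℝ) (ht : t ≠ 0) (hh : h ≠ 0) (hx : x ≠ 0) (hy : y ≠ 0)
    (hz : z ≠ 0) (hx1 : x ≠ h) (hx2 : x ≠ -h) (hy1 : y ≠ h) (hy2 : y ≠ -h)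
    (hz1 : z ≠ h) (hz2 : z ≠ -h)
    (heq : Real.sqrt (t * (1/h^2 - 1/x^2) * (1/h^2 - 1/y^2) * (1/h^2 - 1/z^2)) =
      (1/h + 1/x) * (1/h + 1/y) * (1/h + 1/z)) :
    t * (z - h) / (z + h) = (x + h) * (y + h) / ((x - h) * (y - h)) := by
  have hxp : x + h ≠ 0 := fun H => hx2 (by linarith)
  have hxm : x - h ≠ 0 := fun H => hx1 (by linarith)
  have hyp : y + h ≠ 0 := fun H => hy2 (by linarith)
  have hym : y - h ≠ 0 := fun H => hy1 (by linarith)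
  have hzp : z + h ≠ 0 := fun H => hz2 (by linarith)
  have hzm : z - h ≠ 0 := fun H => hz1 (by linarith)
  have hBx : 1/h + 1/x ≠ 0 := by
    rw [show 1/h + 1/x = (x + h)/(h*x) by field_simp]
    exact div_ne_zero hxp (mul_ne_zero hh hx)
  have hBy : 1/h + 1/y ≠ 0 := by
    rw [show 1/h + 1/y = (y + h)/(h*y) by field_simp]
    exact div_ne_zero hyp (mul_ne_zero hh hy)
  have hBz : 1/h + 1/z ≠ 0 := by
    rw [show 1/h + 1/z = (z + h)/(h*z) by field_simp]
    exact div_ne_zero hzp (mul_ne_zero hh hz)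
  have hB : (1/h + 1/x) * (1/h + 1/y) * (1/h + 1/z) ≠ 0 :=
    mul_ne_zero (mul_ne_zero hBx hBy) hBz
  have hAne : Real.sqrt (t * (1/h^2 - 1/x^2) * (1/h^2 - 1/y^2) * (1/h^2 - 1/z^2)) ≠ 0 := by
    rw [heq]; exact hB
  have hAnn : 0 ≤ t * (1/h^2 - 1/x^2) * (1/h^2 - 1/y^2) * (1/h^2 - 1/z^2) := by
    by_contra hlt
    exact hAne (Real.sqrt_eq_zero_of_nonpos (le_of_not_ge hlt))
  have hsq : t * (1/h^2 - 1/x^2) * (1/h^2 - 1/y^2) * (1/h^2 - 1/z^2)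
      = ((1/h + 1/x) * (1/h + 1/y) * (1/h + 1/z))^2 := by
    rw [← heq, Real.sq_sqrt hAnn]
  have hsq' : t * (x^2 - h^2) * (y^2 - h^2) * (z^2 - h^2)
      = ((x + h) * (y + h) * (z + h))^2 := by
    have hd : ((h*x*(h*y)*(h*z))^2 : ℝ) ≠ 0 := by positivity
    field_simp at hsq
    apply mul_right_cancel₀ hd
    linear_combination (h*x*(h*y)*(h*z))^2 * hsq
  have key : t * (x - h) * (y - h) * (z - h) = (x + h) * (y + h) * (z + h) := by
    have hne : (x + h) * (y + h) * (z + h) ≠ 0 := mul_ne_zero (mul_ne_zero hxp hyp) hzp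
    apply mul_left_cancel₀ hne
    linear_combination hsq'
  field_simp
  linear_combination key
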